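/- Let K = ℚ(√(-m)), m squarefree, with ring of integers O_K, and let d ∈ ℕ be a squarefree divisor of the discriminant d_K. Then the ideal A_d = O_K·d + O_K·(m+√(-m)) satisfies A_d² = d·O_K. -/

import Mathlib

open NumberField Polynomial Module Matrix

section Aux

/-- The discriminant of a rational basis consisting of algebraic integers is an integer
square multiple of the field discriminant. -/
lemma my_discr_dvd {K : Type*} [Field K] [NumberField K] {ι : Type*} [Fintype ι] [DecidableEq ι]
    (b : Basis ι ℚ K) (hb : ∀ i, IsIntegral ℤ (b i)) :
    ∃ c : ℤ, Algebra.discr ℚ ⇑b = (c : ℚ) ^ 2 * (NumberField.discr K : ℚ) := by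
  classical
  let e := (integralBasis K).indexEquiv b
  let ib : Basis ι ℚ K := (integralBasis K).reindex e
  let Q : Matrix ι ι ℤ := fun i j =>
    (RingOfIntegers.basis K).repr ⟨b j, hb j⟩ (e.symm i)
  have hP : ib.toMatrix ⇑b = Q.map (algebraMap ℤ ℚ) := by
    ext i j
    rw [Basis.toMatrix_apply]
    show (integralBasis K).repr (b j) (e.symm i) = _
    have : b j = algebraMap (𝓞 K) K ⟨b j, hb j⟩ := rfl
    rw [this]; refine (integralBasis_repr_apply K _ _).trans ?_
    rfl
  refine ⟨Q.det, ?_⟩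
  have h1 : ⇑b = ib ᵥ* ((ib.toMatrix ⇑b).map (algebraMap ℚ K)) :=
    (Basis.toMatrix_map_vecMul ib ⇑b).symm
  calc Algebra.discr ℚ ⇑b = Algebra.discr ℚ (ib ᵥ* ((ib.toMatrix ⇑b).map (algebraMap ℚ K))) := by
        rw [← h1]
    _ = (ib.toMatrix ⇑b).det ^ 2 * Algebra.discr ℚ ⇑ib := Algebra.discr_of_matrix_vecMul _ _
    _ = (Q.det : ℚ) ^ 2 * (NumberField.discr K : ℚ) := by
        rw [hP]
        congr 1
        · rw [← RingHom.mapMatrix_apply, ← RingHom.map_det]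
          simp
        · rw [coe_discr]
          show Algebra.discr ℚ ⇑((integralBasis K).reindex e) = _
          rw [Basis.coe_reindex, Algebra.discr_reindex]

lemma my_minpoly_eq {K : Type*} [Field K] [Algebra ℚ K] (x : K)
    (hx : x ∉ (algebraMap ℚ K).range) {p : ℚ[X]} (hmonic : p.Monic)
    (hpdeg : p.natDegree = 2) (hroot : aeval x p = 0) : minpoly ℚ x = p := by
  have hint : IsIntegral ℚ x := ⟨p, hmonic, hroot⟩
  have h2 : 2 ≤ (minpoly ℚ x).natDegree := (minpoly.two_le_natDegree_iff hint).mpr hx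
  obtain ⟨q, hq⟩ := minpoly.dvd ℚ x hroot
  have hq0 : q ≠ 0 := by
    rintro rfl
    rw [mul_zero] at hq
    exact hmonic.ne_zero hq
  have hdeg : (minpoly ℚ x).natDegree + q.natDegree = 2 := by
    rw [← hpdeg, hq, Polynomial.natDegree_mul (minpoly.ne_zero hint) hq0]
  have hqd : q.natDegree = 0 := by omega
  have hqC : q = Polynomial.C (q.coeff 0) := Polynomial.eq_C_of_natDegree_eq_zero hqd
  have hc1 : q.coeff 0 = 1 := by
    have h := hmonic
    rw [hq, hqC] at h
    have h2 := h.leadingCoeff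
    rwa [Polynomial.leadingCoeff_mul, Polynomial.leadingCoeff_C,
      (minpoly.monic hint).leadingCoeff, one_mul] at h2
  rw [hq, hqC, hc1, Polynomial.C_1, mul_one]

lemma my_powerBasis {K : Type*} [Field K] [NumberField K] (hdeg : Module.finrank ℚ K = 2)
    (x : K) (hx : x ∉ (algebraMap ℚ K).range) (hint : IsIntegral ℚ x)
    (hxdeg : (minpoly ℚ x).natDegree = 2) :
    ∃ pb : PowerBasis ℚ K, pb.gen = x ∧ pb.dim = 2 := by
  have htop : IntermediateField.adjoin ℚ {x} = ⊤ := by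
    refine IntermediateField.eq_of_le_of_finrank_eq le_top ?_
    rw [IntermediateField.adjoin.finrank hint, hxdeg, IntermediateField.finrank_top', hdeg]
  let pb0 := IntermediateField.adjoin.powerBasis hint
  let f : IntermediateField.adjoin ℚ {x} ≃ₐ[ℚ] K :=
    (IntermediateField.equivOfEq htop).trans IntermediateField.topEquiv
  refine ⟨pb0.map f, ?_, ?_⟩
  · show f pb0.gen = x
    rfl
  · show pb0.dim = 2
    rw [IntermediateField.adjoin.powerBasis_dim, hxdeg]

variable {K : Type*} [Field K] [NumberField K] (hdeg : Module.finrank ℚ K = 2)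
  (m : ℕ) (hm0 : 0 < m) (s : K) (hs : s ^ 2 = -(m : K))

include hm0 hs

lemma my_s_not_mem : s ∉ (algebraMap ℚ K).range := by
  rintro ⟨q, rfl⟩
  have h : (q ^ 2 : ℚ) = -(m : ℚ) := by
    have := hs
    rw [← map_pow] at this
    have h2 : algebraMap ℚ K (q ^ 2) = algebraMap ℚ K (-(m : ℚ)) := by
      rw [this]; push_cast; ring
    exact (algebraMap ℚ K).injective h2
  have h1 : (0:ℚ) ≤ q ^ 2 := sq_nonneg q
  have h2 : (0:ℚ) < m := by exact_mod_cast hm0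
  linarith [h.symm ▸ h1]

lemma my_minpoly_s : minpoly ℚ s = X ^ 2 + C (m : ℚ) := by
  refine my_minpoly_eq s (my_s_not_mem m hm0 s hs) ?_ ?_ ?_
  · exact Polynomial.monic_X_pow_add_C _ (by norm_num)
  · rw [Polynomial.natDegree_X_pow_add_C]
  · simp [hs]

include hdeg

lemma my_norm_s : Algebra.norm ℚ s = (m : ℚ) := by
  have hint : IsIntegral ℚ s :=
    ⟨X ^ 2 + C (m : ℚ), Polynomial.monic_X_pow_add_C _ (by norm_num), by simp [hs]⟩
  obtain ⟨pb, hgen, hdim⟩ := my_powerBasis hdeg s (my_s_not_mem m hm0 s hs) hint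
    (by rw [my_minpoly_s m hm0 s hs, Polynomial.natDegree_X_pow_add_C])
  have h := Algebra.PowerBasis.norm_gen_eq_coeff_zero_minpoly pb
  rw [hgen, hdim, my_minpoly_s m hm0 s hs] at h
  simpa using h

lemma my_discrK_dvd_four_m : (NumberField.discr K : ℤ) ∣ 4 * m := by
  have hint : IsIntegral ℚ s :=
    ⟨X ^ 2 + C (m : ℚ), Polynomial.monic_X_pow_add_C _ (by norm_num), by simp [hs]⟩
  obtain ⟨pb, hgen, hdim⟩ := my_powerBasis hdeg s (my_s_not_mem m hm0 s hs) hint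
    (by rw [my_minpoly_s m hm0 s hs, Polynomial.natDegree_X_pow_add_C])
  have hintZ : IsIntegral ℤ s := by
    refine ⟨X ^ 2 + C (m : ℤ), Polynomial.monic_X_pow_add_C _ (by norm_num), ?_⟩
    simp [hs]
  have hdisc : Algebra.discr ℚ ⇑pb.basis = -(4 * m : ℚ) := by
    rw [Algebra.discr_powerBasis_eq_norm, hgen, my_minpoly_s m hm0 s hs]
    have hder : derivative (X ^ 2 + C (m : ℚ)) = C 2 * X := by
      simp [derivative_X_pow]
      rw [← C_1, ← C_add]; norm_num
    have haeval : aeval s (C (2:ℚ) * X) = algebraMap ℚ K 2 * s := by simp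
    rw [hder, haeval, _root_.map_mul, Algebra.norm_algebraMap, my_norm_s hdeg m hm0 s hs, hdeg]
    norm_num
  obtain ⟨c, hc⟩ := my_discr_dvd pb.basis (fun i => by
    rw [PowerBasis.basis_eq_pow, hgen]
    exact hintZ.pow _)
  rw [hdisc] at hc
  have hZ : -(4 * m : ℤ) = c ^ 2 * (NumberField.discr K : ℤ) := by exact_mod_cast hc
  exact ⟨-c ^ 2, by linarith⟩

lemma my_discrK_dvd_m (hm3 : m % 4 = 3) : (NumberField.discr K : ℤ) ∣ m := by
  obtain ⟨k, hk⟩ : ∃ k : ℕ, m + 1 = 4 * k := ⟨(m + 1) / 4, by omega⟩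
  set t : K := (1 + s) / 2 with ht
  have hkK : (4 : K) * k = (m : K) + 1 := by exact_mod_cast (congrArg (Nat.cast : ℕ → K) hk).symm
  have hroot : aeval t (X ^ 2 - X + C (k : ℚ)) = 0 := by
    have hqk : algebraMap ℚ K (k : ℚ) = (k : K) := by push_cast; ring
    simp only [map_add, map_sub, map_pow, aeval_X, aeval_C, hqk, ht]
    field_simp
    linear_combination hs + hkK
  have htnot : t ∉ (algebraMap ℚ K).range := by
    rintro ⟨q, hq⟩
    refine my_s_not_mem m hm0 s hs ⟨2 * q - 1, ?_⟩
    have h2q : algebraMap ℚ K (2 * q - 1) = 2 * t - 1 := by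
      simp only [_root_.map_sub, _root_.map_mul, _root_.map_one, map_ofNat, hq]
    rw [h2q, ht]
    field_simp
    ring
  have hmono : (X ^ 2 - X + C (k : ℚ)).Monic := by monicity!
  have hdeg2 : (X ^ 2 - X + C (k : ℚ)).natDegree = 2 := by compute_degree!
  have hmin : minpoly ℚ t = X ^ 2 - X + C (k : ℚ) := my_minpoly_eq t htnot hmono hdeg2 hroot
  have hint : IsIntegral ℚ t := ⟨_, hmono, hroot⟩
  obtain ⟨pb, hgen, hdim⟩ := my_powerBasis hdeg t htnot hint (by rw [hmin, hdeg2])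
  have hintZ : IsIntegral ℤ t := by
    refine ⟨X ^ 2 - X + C (k : ℤ), by monicity!, ?_⟩
    have hqk : algebraMap ℤ K (k : ℤ) = (k : K) := by
      rw [algebraMap_int_eq]
      simp
    simp only [eval₂_add, eval₂_sub, eval₂_pow, eval₂_X, eval₂_C, hqk, ht]
    field_simp
    linear_combination hs + hkK
  have hdisc : Algebra.discr ℚ ⇑pb.basis = -(m : ℚ) := by
    rw [Algebra.discr_powerBasis_eq_norm, hgen, hmin]
    have hder : derivative (X ^ 2 - X + C (k : ℚ)) = C 2 * X - 1 := by
      simp [derivative_X_pow]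
      rw [← C_1, ← C_add]; norm_num
    have h2t : (2 : K) * t - 1 = s := by rw [ht]; field_simp; ring
    have haeval : aeval t (C (2:ℚ) * X - 1) = s := by
      simp only [_root_.map_sub, _root_.map_mul, aeval_X, aeval_C, _root_.map_one]
      rw [← h2t]
      norm_num
    rw [hder, haeval, my_norm_s hdeg m hm0 s hs, hdeg]
    norm_num
  obtain ⟨c, hc⟩ := my_discr_dvd pb.basis (fun i => by
    rw [PowerBasis.basis_eq_pow, hgen]
    exact hintZ.pow _)
  rw [hdisc] at hc
  have hZ : -(m : ℤ) = c ^ 2 * (NumberField.discr K : ℤ) := by exact_mod_cast hc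
  exact ⟨-c ^ 2, by linarith⟩

omit hdeg hm0 hs

/-- The key coprimality fact. -/
lemma my_coprime (d f : ℕ) (hm : Squarefree m) (hdsf : Squarefree d)
    (hdodd : m % 4 = 3 → ¬ 2 ∣ d) (hf : m * (m + 1) = d * f) (hd2m : d ∣ 2 * m) :
    Nat.Coprime d f := by
  by_contra h
  have hg1 : Nat.gcd d f ≠ 1 := h
  set p := (Nat.gcd d f).minFac with hp
  have hpp : p.Prime := Nat.minFac_prime hg1
  have hpd : p ∣ d := (Nat.minFac_dvd _).trans (Nat.gcd_dvd_left _ _)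
  have hpf : p ∣ f := (Nat.minFac_dvd _).trans (Nat.gcd_dvd_right _ _)
  have hp2 : p * p ∣ m * (m + 1) := by
    rw [hf]
    exact mul_dvd_mul hpd hpf
  rcases (Nat.Prime.dvd_mul hpp).mp (Dvd.dvd.trans (dvd_mul_right p p) hp2) with hm1 | hm2
  · -- p ∣ m, so p ∤ m + 1, so p * p ∣ m, contradicting squarefreeness of m
    have hnd : ¬ p ∣ (m + 1) := by
      intro hcon
      have h1 : p ∣ 1 := by
        have := Nat.dvd_sub hcon hm1
        simpa using this
      exact hpp.ne_one (Nat.dvd_one.mp h1)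
    have hcop : Nat.Coprime (p * p) (m + 1) :=
      Nat.Coprime.mul ((hpp.coprime_iff_not_dvd).mpr hnd) ((hpp.coprime_iff_not_dvd).mpr hnd)
    have : p * p ∣ m := hcop.dvd_of_dvd_mul_right hp2
    exact hpp.not_isUnit (hm p this)
  · -- p ∣ m + 1, so p ∤ m, p * p ∣ m + 1, and p = 2
    have hnd : ¬ p ∣ m := by
      intro hcon
      have h1 : p ∣ 1 := by
        have := Nat.dvd_sub hm2 hcon
        simpa using this
      exact hpp.ne_one (Nat.dvd_one.mp h1)
    have hcop : Nat.Coprime (p * p) m :=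
      Nat.Coprime.mul ((hpp.coprime_iff_not_dvd).mpr hnd) ((hpp.coprime_iff_not_dvd).mpr hnd)
    have hppm1 : p * p ∣ m + 1 := by
      rw [mul_comm m (m+1)] at hp2
      exact hcop.dvd_of_dvd_mul_right hp2
    have hp2' : p = 2 := by
      rcases (Nat.Prime.dvd_mul hpp).mp (hpd.trans hd2m) with h2 | hm'
      · exact (Nat.prime_dvd_prime_iff_eq hpp Nat.prime_two).mp h2
      · exact absurd hm' hnd
    rw [hp2'] at hppm1
    have hm3 : m % 4 = 3 := by omega
    exact hdodd hm3 (hp2' ▸ hpd)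

end Aux

/-- Let `K = ℚ(√-m)`, `m` squarefree, and let `d` be a squarefree positive divisor of the
discriminant of `K`.  Then the ideal `A_d = 𝓞 K·d + 𝓞 K·(m+√-m)` satisfies
`A_d² = d·𝓞 K`. -/
theorem ideal_Ad_sq (m : ℕ) (hm : Squarefree m) (hm0 : 0 < m)
    (K : Type*) [Field K] [NumberField K] (hdeg : Module.finrank ℚ K = 2)
    (s : K) (hs : s ^ 2 = -(m : K))
    (d : ℕ) (hd0 : 0 < d) (hdsf : Squarefree d) (hdd : (d : ℤ) ∣ NumberField.discr K)
    (ω : 𝓞 K) (hω : algebraMap (𝓞 K) K ω = (m : K) + s) :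
    (Ideal.span {(d : 𝓞 K), ω}) ^ 2 = Ideal.span {(d : 𝓞 K)} := by
  -- basic arithmetic facts about d
  have hd4m : (d : ℤ) ∣ 4 * m := hdd.trans (my_discrK_dvd_four_m hdeg m hm0 s hs)
  have hd4m' : d ∣ 4 * m := by exact_mod_cast hd4m
  have hd2m : d ∣ 2 * m := by
    have h1 : d ∣ (2 * m) ^ 2 := hd4m'.trans ⟨m, by ring⟩
    exact (hdsf.dvd_pow_iff_dvd two_ne_zero).mp h1
  have hdodd : m % 4 = 3 → ¬ 2 ∣ d := by
    intro hm3 h2d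
    have h1 : (d : ℤ) ∣ m := hdd.trans (my_discrK_dvd_m hdeg m hm0 s hs hm3)
    have h2 : (2 : ℕ) ∣ m := by
      have := (Nat.cast_dvd_cast (α := ℤ) h2d).trans h1
      exact_mod_cast this
    omega
  have hdmm : d ∣ m * (m + 1) := by
    have heven : 2 ∣ m * (m + 1) := m.even_mul_succ_self.two_dvd
    obtain ⟨j, hj⟩ := heven
    have h1 : d ∣ (m * (m + 1)) ^ 2 := by
      refine hd2m.trans ?_
      refine ⟨(m + 1) * j, ?_⟩
      rw [pow_two]
      nth_rewrite 2 [hj]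
      ring
    exact (hdsf.dvd_pow_iff_dvd two_ne_zero).mp h1
  obtain ⟨f, hf⟩ := hdmm
  have hcop : Nat.Coprime d f := my_coprime m d f hm hdsf hdodd hf hd2m
  obtain ⟨e, he⟩ := hd2m
  -- key algebraic relation in 𝓞 K
  have hinj := RingOfIntegers.coe_injective (K := K)
  have key : ω ^ 2 = 2 * m * ω - ((m : 𝓞 K) ^ 2 + m) := by
    apply hinj
    rw [map_pow, hω, _root_.map_sub, _root_.map_mul, _root_.map_mul, _root_.map_add, map_pow, hω,
      map_ofNat]
    push_cast
    linear_combination hs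
  have heK : (2 * m : 𝓞 K) = d * e := by exact_mod_cast congrArg (Nat.cast : ℕ → 𝓞 K) he
  have hfK : ((m : 𝓞 K) ^ 2 + m) = d * f := by
    have := congrArg (Nat.cast : ℕ → 𝓞 K) hf
    push_cast at this
    linear_combination this
  have key2 : ω ^ 2 = (d : 𝓞 K) * ((e : 𝓞 K) * ω - f) := by
    rw [key]
    linear_combination ω * heK - hfK
  -- Bezout
  obtain ⟨a, b, hab⟩ : ∃ a b : ℤ, a * d + b * f = 1 := by
    have := Nat.isCoprime_iff_coprime.mpr hcop
    obtain ⟨a, b, hab⟩ := this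
    exact ⟨a, b, hab⟩
  have habK : (a : 𝓞 K) * d + (b : 𝓞 K) * f = 1 := by
    have := congrArg (Int.cast : ℤ → 𝓞 K) hab
    push_cast at this
    exact this
  apply le_antisymm
  · -- A² ⊆ (d)
    rw [pow_two, Ideal.mul_le]
    intro r hr r' hr'
    rw [Ideal.mem_span_pair] at hr hr'
    obtain ⟨u, v, hr⟩ := hr
    obtain ⟨u', v', hr'⟩ := hr'
    rw [Ideal.mem_span_singleton]
    refine ⟨u * u' * d + u * v' * ω + v * u' * ω + v * v' * ((e : 𝓞 K) * ω - f), ?_⟩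
    rw [← hr, ← hr']
    linear_combination (v * v') * key2
  · -- (d) ⊆ A²
    rw [Ideal.span_singleton_le_iff_mem]
    have hd : (d : 𝓞 K) ∈ Ideal.span {(d : 𝓞 K), ω} :=
      Ideal.subset_span (Set.mem_insert _ _)
    have hω' : ω ∈ Ideal.span {(d : 𝓞 K), ω} :=
      Ideal.subset_span (Set.mem_insert_of_mem _ rfl)
    have h1 : (d : 𝓞 K) * (d : 𝓞 K) ∈ (Ideal.span {(d : 𝓞 K), ω}) ^ 2 := by
      rw [pow_two]; exact Ideal.mul_mem_mul hd hd
    have h2 : (d : 𝓞 K) * ω ∈ (Ideal.span {(d : 𝓞 K), ω}) ^ 2 := by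
      rw [pow_two]; exact Ideal.mul_mem_mul hd hω'
    have h3 : ω * ω ∈ (Ideal.span {(d : 𝓞 K), ω}) ^ 2 := by
      rw [pow_two]; exact Ideal.mul_mem_mul hω' hω'
    have hsum : (a : 𝓞 K) * ((d : 𝓞 K) * d) + ((b : 𝓞 K) * e) * ((d : 𝓞 K) * ω)
        + (-(b : 𝓞 K)) * (ω * ω) ∈ (Ideal.span {(d : 𝓞 K), ω}) ^ 2 := by
      exact Ideal.add_mem _ (Ideal.add_mem _ (Ideal.mul_mem_left _ _ h1)
        (Ideal.mul_mem_left _ _ h2)) (Ideal.mul_mem_left _ _ h3)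
    have heq : (d : 𝓞 K) = (a : 𝓞 K) * ((d : 𝓞 K) * d) + ((b : 𝓞 K) * e) * ((d : 𝓞 K) * ω)
        + (-(b : 𝓞 K)) * (ω * ω) := by
      have hω2 : ω * ω = (d : 𝓞 K) * ((e : 𝓞 K) * ω - f) := by rw [← pow_two]; exact key2
      rw [hω2]
      linear_combination (-(d : 𝓞 K)) * habK
    have := hsum
    rwa [← heq] at this
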